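/- Let t ≥ 2 and k ≥ 1 be integers, let m be an even integer with m ≥ 4(t+k)+2, let n be an integer with (t−1)(m−1) ≤ n−1 < t(m−1), and set p = ⌊(n−1)/t⌋. If p < m−k, then R(C_m, B_n^{(k)}) ≥ n + kp + k; that is, there is a graph on n + kp + k − 1 vertices containing no cycle of length m whose complement contains no B_n^{(k)}. -/

import Mathlib

/-- `G` contains a cycle of length `m`. -/
def HasCycleLen {V : Type*} (G : SimpleGraph V) (m : ℕ) : Prop :=
  ∃ (v : V) (c : G.Walk v v), c.IsCycle ∧ c.length = m

/-- `G` contains the book `B_n^{(k)}`: a clique on `k` vertices together with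
`n` further vertices each adjacent to all of them. -/
def HasBook {V : Type*} (G : SimpleGraph V) (k n : ℕ) : Prop :=
  ∃ S T : Finset V, S.card = k ∧ T.card = n ∧ Disjoint S T ∧
    (∀ u ∈ S, ∀ v ∈ S, u ≠ v → G.Adj u v) ∧
    (∀ u ∈ S, ∀ v ∈ T, G.Adj u v)

/-- Every simple graph on `N` vertices contains `C_m` or its complement contains
`B_n^{(k)}`. The Ramsey number `R(C_m, B_n^{(k)})` is the least such `N`. -/
def RamseyProp (m k n N : ℕ) : Prop :=
  ∀ G : SimpleGraph (Fin N), HasCycleLen G m ∨ HasBook Gᶜ k n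

namespace Stmt5Aux

open SimpleGraph Finset

/-! ### Interval finsets in `Fin M` -/

def iv (M lo hi : ℕ) : Finset (Fin M) :=
  (Finset.univ : Finset (Fin M)).filter (fun v => lo ≤ v.val ∧ v.val < hi)

lemma mem_iv {M lo hi : ℕ} {v : Fin M} : v ∈ iv M lo hi ↔ lo ≤ v.val ∧ v.val < hi := by
  simp [iv]

lemma card_iv {M lo hi : ℕ} (h : hi ≤ M) : (iv M lo hi).card = hi - lo := by
  have : iv M lo hi = (Finset.Ico lo hi).attachFin
      (fun x hx => lt_of_lt_of_le (Finset.mem_Ico.mp hx).2 h) := by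
    ext v
    simp [iv, Finset.mem_attachFin, Finset.mem_Ico]
  rw [this, Finset.card_attachFin, Nat.card_Ico]

lemma length_le_card_of_nodup {M : ℕ} {l : List (Fin M)} (hnd : l.Nodup)
    {F : Finset (Fin M)} (h : ∀ x ∈ l, x ∈ F) : l.length ≤ F.card := by
  rw [← List.toFinset_card_of_nodup hnd]
  exact Finset.card_le_card (fun x hx => h x (List.mem_toFinset.mp hx))

/-! ### The spider graph -/

/-- petal id; `0` means "no petal". Body vertices `0..z-1` are attach vertices of
petals `1..z`; petal `j+1` occupies `[s1+j*p, s1+(j+1)*p)`. -/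
def pid (s1 p z u : ℕ) : ℕ :=
  if u < s1 then (if u < z then u + 1 else 0)
  else if u < s1 + z * p then (u - s1) / p + 1 else 0

/-- component id: `0` for the spider (body and petals), `1 + class` for the rest,
which is partitioned into cliques of width `w`. -/
def cmp (s1 p z w u : ℕ) : ℕ :=
  if u < s1 + z * p then 0 else (u - (s1 + z * p)) / w + 1

/-- body vertices: the body clique of the spider, or any vertex of the rest. -/
def isBody (s1 p z u : ℕ) : Prop := u < s1 ∨ s1 + z * p ≤ u

instance (s1 p z u : ℕ) : Decidable (isBody s1 p z u) := by
  unfold isBody; infer_instance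

def graph (M s1 p z w : ℕ) : SimpleGraph (Fin M) where
  Adj u v := u ≠ v ∧ cmp s1 p z w u.val = cmp s1 p z w v.val ∧
    ((isBody s1 p z u.val ∧ isBody s1 p z v.val) ∨ pid s1 p z u.val = pid s1 p z v.val)
  symm := by
    constructor
    rintro u v ⟨h1, h2, h3⟩
    refine ⟨h1.symm, h2.symm, ?_⟩
    rcases h3 with ⟨a, b⟩ | h
    · exact Or.inl ⟨b, a⟩
    · exact Or.inr h.symm
  loopless := ⟨by rintro u ⟨h, -⟩; exact h rfl⟩

section CycleFree

variable {M s1 p z w : ℕ}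

lemma cmp_const {a b : Fin M} (W : (graph M s1 p z w).Walk a b) :
    ∀ x ∈ W.support, cmp s1 p z w x.val = cmp s1 p z w a.val := by
  induction W with
  | nil => intro x hx; simp at hx; subst hx; rfl
  | cons h q ih =>
    intro x hx
    rw [SimpleGraph.Walk.support_cons, List.mem_cons] at hx
    rcases hx with rfl | hx
    · rfl
    · exact (ih x hx).trans h.2.1.symm

variable {j : ℕ}

/-- `inA` : interior of petal `j+1`. -/
def inA (s1 p j : ℕ) (u : Fin M) : Prop := s1 + j * p ≤ u.val ∧ u.val < s1 + (j + 1) * p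

lemma pid_of_inA (hp : 1 ≤ p) (hjz : j < z) {u : Fin M} (hu : inA s1 p j u) :
    pid s1 p z u.val = j + 1 := by
  obtain ⟨h1, h2⟩ := hu
  have hj1 : (j + 1) * p ≤ z * p := Nat.mul_le_mul_right p hjz
  have hd : (u.val - s1) / p = j := by
    have hlo : j * p ≤ u.val - s1 := by omega
    have hhi : u.val - s1 < (j + 1) * p := by omega
    exact Nat.div_eq_of_lt_le hlo (by simpa using hhi)
  have hus1 : ¬ u.val < s1 := by
    have : j * p ≤ j * p := le_refl _
    omega
  have huo : u.val < s1 + z * p := by omega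
  simp [pid, hus1, huo, hd]

lemma not_isBody_of_inA (hjz : j < z) (hp : 1 ≤ p) {u : Fin M} (hu : inA s1 p j u) :
    ¬ isBody s1 p z u.val := by
  obtain ⟨h1, h2⟩ := hu
  have hj1 : (j + 1) * p ≤ z * p := Nat.mul_le_mul_right p hjz
  intro hb
  rcases hb with hb | hb <;> omega

/-- all edges leaving the interior of petal `j+1` go to the attach vertex `j`. -/
lemma adj_out (hp : 1 ≤ p) (hjz : j < z) {u v : Fin M}
    (h : (graph M s1 p z w).Adj u v) (hu : inA s1 p j u) (hv : ¬ inA s1 p j v) :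
    v.val = j := by
  obtain ⟨hne, hcmp, hor⟩ := h
  have hpu : pid s1 p z u.val = j + 1 := pid_of_inA hp hjz hu
  have hnbu : ¬ isBody s1 p z u.val := not_isBody_of_inA hjz hp hu
  have hpv : pid s1 p z v.val = j + 1 := by
    rcases hor with ⟨hb, _⟩ | hpid
    · exact absurd hb hnbu
    · rw [← hpid, hpu]
  by_cases h1 : v.val < s1
  · by_cases h2 : v.val < z
    · simp [pid, h1, h2] at hpv; omega
    · simp [pid, h1, h2] at hpv
  · by_cases h2 : v.val < s1 + z * p
    · exfalso
      apply hv
      have hd : (v.val - s1) / p = j := by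
        simp [pid, h1, h2] at hpv
        omega
      have hdm := Nat.div_add_mod (v.val - s1) p
      have hml : (v.val - s1) % p < p := Nat.mod_lt _ hp
      rw [hd] at hdm
      constructor
      · rw [Nat.mul_comm]; omega
      · have hexp : (j + 1) * p = p * j + p := by ring
        rw [hexp]; omega
    · simp [pid, h1, h2] at hpv

lemma crossing (hp : 1 ≤ p) (hjz : j < z) (hjM : j < M) {a b : Fin M}
    (W : (graph M s1 p z w).Walk a b) : inA s1 p j a → ¬ inA s1 p j b →
    b.val ≠ j → (⟨j, hjM⟩ : Fin M) ∈ W.support := by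
  induction W with
  | nil => intro ha hb _; exact absurd ha hb
  | @cons u c bb h q ih =>
    intro ha hb hbj
    by_cases hc : inA s1 p j c
    · rw [SimpleGraph.Walk.support_cons]
      exact List.mem_cons_of_mem _ (ih hc hb hbj)
    · have hcj : c.val = j := adj_out hp hjz h ha hc
      rw [SimpleGraph.Walk.support_cons]
      refine List.mem_cons_of_mem _ ?_
      have hce : c = ⟨j, hjM⟩ := Fin.ext hcj
      rw [← hce]; exact SimpleGraph.Walk.start_mem_support q

lemma mem_tail_of_closed {G : SimpleGraph (Fin M)} {v : Fin M} {c : G.Walk v v}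
    (hne : ¬ c.Nil) {b : Fin M} (hb : b ∈ c.support) : b ∈ c.support.tail := by
  cases c with
  | nil => exact absurd SimpleGraph.Walk.nil_nil hne
  | cons h q =>
    rw [SimpleGraph.Walk.support_cons] at hb ⊢
    rcases List.mem_cons.mp hb with rfl | hb
    · exact q.end_mem_support
    · exact hb

/-- if a cycle meets the interior of petal `j+1`, it stays in the petal block. -/
lemma cycle_in_petal (hp : 1 ≤ p) (hjz : j < z) (hjM : j < M) (hzs1 : z ≤ s1) {v : Fin M}
    {c : (graph M s1 p z w).Walk v v} (hc : c.IsCycle) {u : Fin M}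
    (hu : u ∈ c.support) (huA : inA s1 p j u) :
    ∀ b ∈ c.support, inA s1 p j b ∨ b.val = j := by
  by_contra hcon
  push_neg at hcon
  obtain ⟨b, hbsup, hbA, hbj⟩ := hcon
  set x : Fin M := ⟨j, hjM⟩ with hxdef
  have hxA : ¬ inA s1 p j x := by
    intro hxin
    have h1 : s1 + j * p ≤ j := hxin.1
    omega
  have hxu : x ≠ u := by intro hxu; rw [hxu] at hxA; exact hxA huA
  have hbu : b ≠ u := by intro hbu; rw [hbu] at hbA; exact hbA huA
  -- rotate the cycle to start at u
  set c' := c.rotate u hu with hc'def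
  have hc'cyc : c'.IsCycle := hc.rotate hu
  have hbtail : b ∈ c.support.tail := mem_tail_of_closed (hc.ne_nil ∘ SimpleGraph.Walk.nil_iff_eq_nil.mp) hbsup
  have hperm := SimpleGraph.Walk.support_rotate c u hu
  have hb' : b ∈ c'.support.tail := hperm.mem_iff.mpr hbtail
  have hbsup' : b ∈ c'.support := List.mem_of_mem_tail hb'
  set w1 := c'.takeUntil b hbsup' with hw1
  set w2 := c'.dropUntil b hbsup' with hw2
  have hx1 : x ∈ w1.support := crossing hp hjz hjM w1 huA hbA hbj
  have hx2 : x ∈ w2.support := by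
    have := crossing hp hjz hjM w2.reverse huA hbA hbj
    rw [SimpleGraph.Walk.support_reverse, List.mem_reverse] at this
    exact this
  have hspec : w1.append w2 = c' := c'.take_spec hbsup'
  have hsupp : c'.support = w1.support ++ w2.support.tail := by
    rw [← hspec, SimpleGraph.Walk.support_append]
  have htail : c'.support.tail = w1.support.tail ++ w2.support.tail := by
    rw [hsupp, w1.support_eq_cons]
    rfl
  have hnd : (w1.support.tail ++ w2.support.tail).Nodup := by
    rw [← htail]; exact hc'cyc.support_nodup
  have hx1t : x ∈ w1.support.tail := by
    rw [w1.support_eq_cons] at hx1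
    rcases List.mem_cons.mp hx1 with h | h
    · exact absurd h hxu
    · exact h
  have hx2t : x ∈ w2.support.tail := by
    rw [w2.support_eq_cons] at hx2
    rcases List.mem_cons.mp hx2 with h | h
    · exact absurd (congrArg Fin.val h.symm) hbj
    · exact h
  exact (List.disjoint_of_nodup_append hnd) hx1t hx2t

end CycleFree

section Book

variable {M s1 p z w : ℕ}

/-- The graph has no cycle of length `> w`. -/
lemma no_long_cycle {m : ℕ} (hp : 1 ≤ p) (hzs1 : z ≤ s1) (hs1w : s1 ≤ w) (hpw : p + 1 ≤ w)
    (hoM : s1 + z * p ≤ M) (hwm : w < m) :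
    ¬ ∃ (v : Fin M) (c : (graph M s1 p z w).Walk v v), c.IsCycle ∧ c.length = m := by
  rintro ⟨v, c, hc, hlen⟩
  have hnd := hc.support_nodup
  have htl : c.support.tail.length = m := by
    have h1 := c.length_support
    have h2 : c.support.tail.length = c.support.length - 1 := List.length_tail
    omega
  by_cases hpet : ∃ u ∈ c.support, s1 ≤ u.val ∧ u.val < s1 + z * p
  · obtain ⟨u, hu, hu1, hu2⟩ := hpet
    have hp0 : 0 < p := hp
    set j := (u.val - s1) / p with hjdef
    have hjz : j < z := by
      rw [hjdef]
      rw [Nat.div_lt_iff_lt_mul hp0]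
      have : z * p = p * z := Nat.mul_comm _ _
      omega
    have hjM : j < M := by
      have : z * p ≤ z * p := le_refl _
      have h1 : j < z := hjz
      have h2 : z ≤ s1 := hzs1
      have h3 : s1 ≤ s1 + z * p := Nat.le_add_right _ _
      omega
    have huA : inA s1 p j u := by
      have hdm := Nat.div_add_mod (u.val - s1) p
      have hml : (u.val - s1) % p < p := Nat.mod_lt _ hp0
      rw [← hjdef] at hdm
      constructor
      · have : j * p = p * j := Nat.mul_comm _ _
        omega
      · have : (j + 1) * p = p * j + p := by ring
        omega
    have hall := cycle_in_petal hp hjz hjM hzs1 hc hu huA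
    have hhiM : s1 + (j + 1) * p ≤ M := by
      have h1 : (j + 1) * p ≤ z * p := Nat.mul_le_mul_right p hjz
      omega
    set F := iv M (s1 + j * p) (s1 + (j + 1) * p) ∪ {(⟨j, hjM⟩ : Fin M)} with hF
    have hFcard : F.card ≤ p + 1 := by
      refine le_trans (Finset.card_union_le _ _) ?_
      rw [card_iv hhiM, Finset.card_singleton]
      have : (j + 1) * p = j * p + p := by ring
      omega
    have hsub : ∀ x ∈ c.support.tail, x ∈ F := by
      intro x hx
      have hxs : x ∈ c.support := List.mem_of_mem_tail hx
      rcases hall x hxs with h | h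
      · exact Finset.mem_union_left _ (mem_iv.mpr ⟨h.1, h.2⟩)
      · refine Finset.mem_union_right _ ?_
        rw [Finset.mem_singleton]
        exact Fin.ext h
    have := length_le_card_of_nodup hnd hsub
    omega
  · push_neg at hpet
    have hcv := cmp_const c
    by_cases hv : v.val < s1 + z * p
    · have hvs1 : v.val < s1 := by
        have := hpet v c.start_mem_support
        omega
      have hcmpv : cmp s1 p z w v.val = 0 := by simp [cmp, hv]
      have hsub : ∀ x ∈ c.support.tail, x ∈ iv M 0 s1 := by
        intro x hx
        have hxs := List.mem_of_mem_tail hx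
        have h1 := (hcv x hxs).trans hcmpv
        have h2 := hpet x hxs
        by_cases hxo : x.val < s1 + z * p
        · exact mem_iv.mpr ⟨Nat.zero_le _, by omega⟩
        · exfalso; simp [cmp, hxo] at h1
      have hle := length_le_card_of_nodup hnd hsub
      rw [card_iv (le_trans (Nat.le_add_right s1 (z * p)) hoM)] at hle
      omega
    · have hw0 : 0 < w := by omega
      set cl := (v.val - (s1 + z * p)) / w with hcldef
      have hcmpv : cmp s1 p z w v.val = cl + 1 := by simp [cmp, hv, hcldef]
      have hsub : ∀ x ∈ c.support.tail,
          x ∈ iv M (s1 + z * p + cl * w) (min (s1 + z * p + (cl + 1) * w) M) := by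
        intro x hx
        have hxs := List.mem_of_mem_tail hx
        have h1 := (hcv x hxs).trans hcmpv
        by_cases hxo : x.val < s1 + z * p
        · exfalso; simp [cmp, hxo] at h1
        · have hd : (x.val - (s1 + z * p)) / w = cl := by
            simp [cmp, hxo] at h1
            omega
          have hdm := Nat.div_add_mod (x.val - (s1 + z * p)) w
          have hml : (x.val - (s1 + z * p)) % w < w := Nat.mod_lt _ hw0
          rw [hd] at hdm
          have hxM : x.val < M := x.isLt
          have he1 : cl * w = w * cl := Nat.mul_comm _ _
          have he2 : (cl + 1) * w = w * cl + w := by ring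
          refine mem_iv.mpr ⟨by omega, by omega⟩
      have hle := length_le_card_of_nodup hnd hsub
      rw [card_iv (min_le_right _ _)] at hle
      have he2 : (cl + 1) * w = cl * w + w := by ring
      omega

end Book

/-! ### Book side -/

/-- coverage set assigned to each potential page vertex -/
def FF (M s1 p z w : ℕ) (full : Bool) (u : Fin M) : Finset (Fin M) :=
  if u.val < s1 then iv M 0 s1
  else if u.val < s1 + z * p then
    iv M (s1 + ((u.val - s1) / p) * p) (s1 + ((u.val - s1) / p) * p + p) ∪
      (if full then iv M ((u.val - s1) / p) ((u.val - s1) / p + 1) else ∅)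
  else iv M (s1 + z * p + ((u.val - (s1 + z * p)) / w) * w)
    (min (s1 + z * p + ((u.val - (s1 + z * p)) / w + 1) * w) M)

section Book2

variable {M s1 p z w : ℕ}

lemma petal_div_lt (hp : 1 ≤ p) {u : Fin M} (h1 : s1 ≤ u.val) (h2 : u.val < s1 + z * p) :
    (u.val - s1) / p < z := by
  rw [Nat.div_lt_iff_lt_mul hp]
  have : z * p = p * z := Nat.mul_comm _ _
  omega

lemma petal_div_bounds (hp : 1 ≤ p) {x j : ℕ} (h1 : s1 ≤ x) (hd : (x - s1) / p = j) :
    s1 + j * p ≤ x ∧ x < s1 + j * p + p := by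
  have hdm := Nat.div_add_mod (x - s1) p
  have hml : (x - s1) % p < p := Nat.mod_lt _ hp
  rw [hd] at hdm
  have : j * p = p * j := Nat.mul_comm _ _
  omega

lemma petal_div_eq (hp : 1 ≤ p) {x j : ℕ} (h1 : s1 + j * p ≤ x) (h2 : x < s1 + j * p + p) :
    (x - s1) / p = j := by
  have hlo : j * p ≤ x - s1 := by omega
  have hhi : x - s1 < (j + 1) * p := by
    have hj : (j + 1) * p = j * p + p := by ring
    omega
  exact Nat.div_eq_of_lt_le hlo (by simpa using hhi)

lemma cls_div_bounds (hw : 1 ≤ w) {x cl : ℕ} (h1 : s1 + z * p ≤ x)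
    (hd : (x - (s1 + z * p)) / w = cl) :
    s1 + z * p + cl * w ≤ x ∧ x < s1 + z * p + cl * w + w := by
  have hdm := Nat.div_add_mod (x - (s1 + z * p)) w
  have hml : (x - (s1 + z * p)) % w < w := Nat.mod_lt _ hw
  rw [hd] at hdm
  have : cl * w = w * cl := Nat.mul_comm _ _
  omega

lemma cls_div_eq (hw : 1 ≤ w) {x cl : ℕ} (h1 : s1 + z * p + cl * w ≤ x)
    (h2 : x < s1 + z * p + cl * w + w) : (x - (s1 + z * p)) / w = cl := by
  have hlo : cl * w ≤ x - (s1 + z * p) := by omega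
  have hhi : x - (s1 + z * p) < (cl + 1) * w := by
    have hc : (cl + 1) * w = cl * w + w := by ring
    omega
  exact Nat.div_eq_of_lt_le hlo (by simpa using hhi)

/-- every element of `FF u` is `u` itself or a neighbour of `u`. -/
lemma key_FF (hp : 1 ≤ p) (hw : 1 ≤ w) (hzs1 : z ≤ s1) {full : Bool} {u vv : Fin M}
    (hvv : vv ∈ FF M s1 p z w full u) : vv = u ∨ (graph M s1 p z w).Adj u vv := by
  by_cases hne : vv = u
  · exact Or.inl hne
  refine Or.inr ?_
  have hneu : u ≠ vv := fun h => hne h.symm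
  unfold FF at hvv
  by_cases h1 : u.val < s1
  · rw [if_pos h1] at hvv
    rw [mem_iv] at hvv
    refine ⟨hneu, ?_, Or.inl ⟨Or.inl h1, Or.inl hvv.2⟩⟩
    have hu0 : cmp s1 p z w u.val = 0 := by simp [cmp]; omega
    have hv0 : cmp s1 p z w vv.val = 0 := by simp [cmp]; omega
    rw [hu0, hv0]
  · rw [if_neg h1] at hvv
    by_cases h2 : u.val < s1 + z * p
    · rw [if_pos h2] at hvv
      set j := (u.val - s1) / p with hjdef
      have hjz : j < z := petal_div_lt hp (by omega) h2
      have hjp1 : j * p + p ≤ z * p := by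
        have : (j + 1) * p ≤ z * p := Nat.mul_le_mul_right p hjz
        have : (j + 1) * p = j * p + p := by ring
        omega
      have hpidu : pid s1 p z u.val = j + 1 := by
        simp only [pid, if_neg h1, if_pos h2, hjdef]
      have hcmpu : cmp s1 p z w u.val = 0 := by simp [cmp, h2]
      rcases Finset.mem_union.mp hvv with hvv | hvv
      · rw [mem_iv] at hvv
        have hvs1 : s1 ≤ vv.val := by omega
        have hvo : vv.val < s1 + z * p := by omega
        have hdv : (vv.val - s1) / p = j := petal_div_eq hp hvv.1 hvv.2
        refine ⟨hneu, ?_, Or.inr ?_⟩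
        · have : cmp s1 p z w vv.val = 0 := by simp [cmp, hvo]
          rw [hcmpu, this]
        · have : pid s1 p z vv.val = j + 1 := by
            simp only [pid, if_neg (by omega : ¬ vv.val < s1), if_pos hvo, hdv]
          rw [hpidu, this]
      · cases full with
        | false => simp at hvv
        | true =>
          rw [if_pos rfl, mem_iv] at hvv
          have hvj : vv.val = j := by omega
          have hvs1 : vv.val < s1 := by omega
          refine ⟨hneu, ?_, Or.inr ?_⟩
          · have : cmp s1 p z w vv.val = 0 := by simp [cmp]; omega
            rw [hcmpu, this]
          · have : pid s1 p z vv.val = j + 1 := by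
              simp only [pid, hvj]
              rw [if_pos (show j < s1 by omega), if_pos hjz]
            rw [hpidu, this]
    · rw [if_neg h2] at hvv
      rw [mem_iv] at hvv
      set cl := (u.val - (s1 + z * p)) / w with hcldef
      have hvlo : s1 + z * p + cl * w ≤ vv.val := hvv.1
      have hvhi : vv.val < s1 + z * p + cl * w + w := by
        have h3 : (cl + 1) * w = cl * w + w := by ring
        have := hvv.2
        omega
      have hvo : s1 + z * p ≤ vv.val := by omega
      have hdv : (vv.val - (s1 + z * p)) / w = cl := cls_div_eq hw hvlo hvhi
      refine ⟨hneu, ?_, Or.inl ⟨Or.inr (by omega), Or.inr hvo⟩⟩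
      have hcu : cmp s1 p z w u.val = cl + 1 := by simp [cmp, h2, hcldef]
      have hcv : cmp s1 p z w vv.val = cl + 1 := by
        simp only [cmp, if_neg (by omega : ¬ vv.val < s1 + z * p), hdv]
      rw [hcu, hcv]

/-- membership facts for `FF`. -/
lemma FF_mem_spec (hp : 1 ≤ p) (hw : 1 ≤ w) (hzs1 : z ≤ s1) {full : Bool} {u vv : Fin M}
    (hvv : vv ∈ FF M s1 p z w full u) :
    (u.val < s1 ∧ vv.val < s1) ∨
    (s1 ≤ u.val ∧ u.val < s1 + z * p ∧
      ((s1 ≤ vv.val ∧ vv.val < s1 + z * p ∧ (vv.val - s1) / p = (u.val - s1) / p) ∨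
        (full = true ∧ vv.val = (u.val - s1) / p ∧ vv.val < s1))) ∨
    (s1 + z * p ≤ u.val ∧ s1 + z * p ≤ vv.val ∧
      (vv.val - (s1 + z * p)) / w = (u.val - (s1 + z * p)) / w) := by
  unfold FF at hvv
  by_cases h1 : u.val < s1
  · rw [if_pos h1, mem_iv] at hvv
    exact Or.inl ⟨h1, hvv.2⟩
  · rw [if_neg h1] at hvv
    by_cases h2 : u.val < s1 + z * p
    · rw [if_pos h2] at hvv
      set j := (u.val - s1) / p with hjdef
      have hjz : j < z := petal_div_lt hp (by omega) h2
      have hjp1 : j * p + p ≤ z * p := by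
        have h3 : (j + 1) * p ≤ z * p := Nat.mul_le_mul_right p hjz
        have h4 : (j + 1) * p = j * p + p := by ring
        omega
      refine Or.inr (Or.inl ⟨by omega, h2, ?_⟩)
      rcases Finset.mem_union.mp hvv with hvv | hvv
      · rw [mem_iv] at hvv
        have hdv : (vv.val - s1) / p = j := petal_div_eq hp hvv.1 hvv.2
        exact Or.inl ⟨by omega, by omega, hdv⟩
      · cases full with
        | false => simp at hvv
        | true =>
          rw [if_pos rfl, mem_iv] at hvv
          exact Or.inr ⟨rfl, by omega, by omega⟩
    · rw [if_neg h2, mem_iv] at hvv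
      set cl := (u.val - (s1 + z * p)) / w with hcldef
      have hvhi : vv.val < s1 + z * p + cl * w + w := by
        have h3 : (cl + 1) * w = cl * w + w := by ring
        have := hvv.2
        omega
      have hdv : (vv.val - (s1 + z * p)) / w = cl := cls_div_eq hw hvv.1 hvhi
      exact Or.inr (Or.inr ⟨by omega, by omega, hdv⟩)

/-- adjacency constructors -/
lemma adj_body {u u' : Fin M} (h : u.val < s1) (h' : u'.val < s1) (hne : u ≠ u') :
    (graph M s1 p z w).Adj u u' := by
  refine ⟨hne, ?_, Or.inl ⟨Or.inl h, Or.inl h'⟩⟩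
  have e1 : cmp s1 p z w u.val = 0 := by simp [cmp]; omega
  have e2 : cmp s1 p z w u'.val = 0 := by simp [cmp]; omega
  rw [e1, e2]

lemma adj_petal {u u' : Fin M} (h1 : s1 ≤ u.val) (h2 : u.val < s1 + z * p)
    (h1' : s1 ≤ u'.val) (h2' : u'.val < s1 + z * p)
    (hd : (u.val - s1) / p = (u'.val - s1) / p) (hne : u ≠ u') :
    (graph M s1 p z w).Adj u u' := by
  refine ⟨hne, ?_, Or.inr ?_⟩
  · have e1 : cmp s1 p z w u.val = 0 := by simp [cmp, h2]
    have e2 : cmp s1 p z w u'.val = 0 := by simp [cmp, h2']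
    rw [e1, e2]
  · have e1 : pid s1 p z u.val = (u.val - s1) / p + 1 := by
      simp only [pid, if_neg (by omega : ¬ u.val < s1), if_pos h2]
    have e2 : pid s1 p z u'.val = (u'.val - s1) / p + 1 := by
      simp only [pid, if_neg (by omega : ¬ u'.val < s1), if_pos h2']
    rw [e1, e2, hd]

lemma adj_cls {u u' : Fin M} (h1 : s1 + z * p ≤ u.val) (h1' : s1 + z * p ≤ u'.val)
    (hd : (u.val - (s1 + z * p)) / w = (u'.val - (s1 + z * p)) / w) (hne : u ≠ u') :
    (graph M s1 p z w).Adj u u' := by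
  refine ⟨hne, ?_, Or.inl ⟨Or.inr h1, Or.inr h1'⟩⟩
  have e1 : cmp s1 p z w u.val = (u.val - (s1 + z * p)) / w + 1 := by
    simp only [cmp, if_neg (by omega : ¬ u.val < s1 + z * p)]
  have e2 : cmp s1 p z w u'.val = (u'.val - (s1 + z * p)) / w + 1 := by
    simp only [cmp, if_neg (by omega : ¬ u'.val < s1 + z * p)]
  rw [e1, e2, hd]

lemma FF_disjoint (hp : 1 ≤ p) (hw : 1 ≤ w) (hzs1 : z ≤ s1) {full : Bool} {u u' : Fin M}
    (hne : u ≠ u') (hnadj : ¬ (graph M s1 p z w).Adj u u')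
    (hfull : full = true → ¬ u.val < s1 ∧ ¬ u'.val < s1) :
    Disjoint (FF M s1 p z w full u) (FF M s1 p z w full u') := by
  rw [Finset.disjoint_left]
  intro vv hv hv'
  have hs := FF_mem_spec hp hw hzs1 hv
  have hs' := FF_mem_spec hp hw hzs1 hv'
  rcases hs with ⟨hu1, hv1⟩ | ⟨hu1, hu2, hpet⟩ | ⟨hu1, hv1, hd⟩
  · rcases hs' with ⟨hu1', hv1'⟩ | ⟨hu1', hu2', hpet'⟩ | ⟨hu1', hv1', hd'⟩
    · exact hnadj (adj_body hu1 hu1' hne)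
    · rcases hpet' with ⟨ha, hb, _⟩ | ⟨hf, _, _⟩
      · omega
      · exact (hfull hf).1 hu1
    · omega
  · rcases hs' with ⟨hu1', hv1'⟩ | ⟨hu1', hu2', hpet'⟩ | ⟨hu1', hv1', hd'⟩
    · rcases hpet with ⟨ha, hb, _⟩ | ⟨hf, _, _⟩
      · omega
      · exact (hfull hf).2 hu1'
    · -- both petal
      rcases hpet with ⟨ha, hb, hd⟩ | ⟨hf, hj, hjs⟩
      · rcases hpet' with ⟨ha', hb', hd'⟩ | ⟨hf', hj', hjs'⟩
        · exact hnadj (adj_petal hu1 hu2 hu1' hu2' (by omega) hne)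
        · omega
      · rcases hpet' with ⟨ha', hb', hd'⟩ | ⟨hf', hj', hjs'⟩
        · omega
        · exact hnadj (adj_petal hu1 hu2 hu1' hu2' (by omega) hne)
    · -- petal vs cls : vv in petal region or attach (< s1) vs vv ≥ s1+z*p
      have hjz : (u.val - s1) / p < z := petal_div_lt hp hu1 hu2
      rcases hpet with ⟨ha, hb, _⟩ | ⟨hf, hj, hjs⟩ <;> omega
  · rcases hs' with ⟨hu1', hv1'⟩ | ⟨hu1', hu2', hpet'⟩ | ⟨hu1', hv1', hd'⟩
    · omega
    · have hjz : (u'.val - s1) / p < z := petal_div_lt hp hu1' hu2'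
      rcases hpet' with ⟨ha, hb, _⟩ | ⟨hf, hj, hjs⟩ <;> omega
    · exact hnadj (adj_cls hu1 hu1' (by omega) hne)

/-- card lower bounds -/
lemma card_FF_body {full : Bool} (hs1M : s1 ≤ M) {u : Fin M} (h1 : u.val < s1) :
    (FF M s1 p z w full u).card = s1 := by
  unfold FF
  rw [if_pos h1, card_iv hs1M]
  omega

lemma card_FF_petal (hp : 1 ≤ p) (hzs1 : z ≤ s1) (hoM : s1 + z * p ≤ M) {full : Bool} {u : Fin M}
    (h1 : ¬ u.val < s1) (h2 : u.val < s1 + z * p) :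
    p ≤ (FF M s1 p z w full u).card ∧
      (full = true → p + 1 ≤ (FF M s1 p z w full u).card) := by
  unfold FF
  rw [if_neg h1, if_pos h2]
  set j := (u.val - s1) / p with hjdef
  have hjz : j < z := petal_div_lt hp (by omega) h2
  have hjp1 : j * p + p ≤ z * p := by
    have h3 : (j + 1) * p ≤ z * p := Nat.mul_le_mul_right p hjz
    have h4 : (j + 1) * p = j * p + p := by ring
    omega
  have hiM : s1 + j * p + p ≤ M := by omega
  have hcard1 : (iv M (s1 + j * p) (s1 + j * p + p)).card = p := by
    rw [card_iv hiM]; omega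
  constructor
  · refine le_trans (le_of_eq hcard1.symm) (Finset.card_le_card Finset.subset_union_left)
  · intro hf
    subst hf
    rw [if_pos rfl]
    have hjM : j + 1 ≤ M := by omega
    have hcard2 : (iv M j (j + 1)).card = 1 := by rw [card_iv hjM]; omega
    have hdisj : Disjoint (iv M (s1 + j * p) (s1 + j * p + p)) (iv M j (j + 1)) := by
      rw [Finset.disjoint_left]
      intro a ha hb
      rw [mem_iv] at ha hb
      omega
    rw [Finset.card_union_of_disjoint hdisj, hcard1, hcard2]

lemma card_FF_cls {D E : ℕ} (hw : 1 ≤ w) (hpw : p + 1 ≤ w)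
    (hM : M = s1 + z * p + (D * w + E)) (hE : E = 0 ∨ (p + 1 ≤ E ∧ E ≤ w))
    {full : Bool} {u : Fin M} (h2 : ¬ u.val < s1 + z * p) :
    p + 1 ≤ (FF M s1 p z w full u).card := by
  unfold FF
  rw [if_neg (by omega : ¬ u.val < s1), if_neg h2]
  set cl := (u.val - (s1 + z * p)) / w with hcldef
  have huM : u.val < M := u.isLt
  have hdm := Nat.div_add_mod (u.val - (s1 + z * p)) w
  have hml : (u.val - (s1 + z * p)) % w < w := Nat.mod_lt _ hw
  rw [← hcldef] at hdm
  have hwcl : w * cl = cl * w := Nat.mul_comm _ _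
  have hclD : cl * w + (p + 1) ≤ D * w + E := by
    rcases hE with hE0 | ⟨hE1, hE2⟩
    · have hclt : cl < D := by
        by_contra hcon
        push_neg at hcon
        have : D * w ≤ cl * w := Nat.mul_le_mul_right w hcon
        omega
      have : (cl + 1) * w ≤ D * w := Nat.mul_le_mul_right w hclt
      have he : (cl + 1) * w = cl * w + w := by ring
      omega
    · have hclt : cl ≤ D := by
        by_contra hcon
        push_neg at hcon
        have h4 : (D + 1) * w ≤ cl * w := Nat.mul_le_mul_right w hcon
        have he : (D + 1) * w = D * w + w := by ring
        omega
      have : cl * w ≤ D * w := Nat.mul_le_mul_right w hclt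
      omega
  have he2 : (cl + 1) * w = cl * w + w := by ring
  rw [card_iv (min_le_right _ _)]
  omega

/-- the main book-refutation -/
lemma no_book {k n D E : ℕ} (hp : 1 ≤ p) (hw : 1 ≤ w) (hk : 1 ≤ k)
    (hzs1 : z ≤ s1) (hs1pk : p + k ≤ s1) (hpw : p + 1 ≤ w)
    (hE : E = 0 ∨ (p + 1 ≤ E ∧ E ≤ w)) (hM : M = s1 + z * p + (D * w + E))
    (hMn : M + 1 = n + k * (p + 1)) :
    ¬ HasBook (graph M s1 p z w)ᶜ k n := by
  rintro ⟨S, T, hSk, hTn, hdisj, hSadj, hSTadj⟩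
  have hoM : s1 + z * p ≤ M := by omega
  have hs1M : s1 ≤ M := by omega
  have hSind : ∀ u ∈ S, ∀ v ∈ S, u ≠ v → ¬ (graph M s1 p z w).Adj u v := by
    intro u hu v hv huv
    exact ((SimpleGraph.compl_adj _ _ _).mp (hSadj u hu v hv huv)).2
  have hTadj : ∀ u ∈ S, ∀ v ∈ T, ¬ (graph M s1 p z w).Adj u v ∧ u ≠ v := by
    intro u hu v hv
    have h := (SimpleGraph.compl_adj _ _ _).mp (hSTadj u hu v hv)
    exact ⟨h.2, h.1⟩
  -- choose the mode
  by_cases hbody : ∃ x ∈ S, x.val < s1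
  case neg =>
    -- full mode
    set F := FF M s1 p z w true with hFdef
    have hpair : ∀ x ∈ S, ∀ y ∈ S, x ≠ y → Disjoint (F x) (F y) := by
      intro x hx y hy hxy
      exact FF_disjoint hp hw hzs1 hxy (hSind x hx y hy hxy)
        (fun _ => ⟨fun hc => hbody ⟨x, hx, hc⟩, fun hc => hbody ⟨y, hy, hc⟩⟩)
    have hTB : Disjoint T (S.biUnion F) := by
      rw [Finset.disjoint_left]
      intro vv hvT hvB
      obtain ⟨u, hu, hvu⟩ := Finset.mem_biUnion.mp hvB
      rcases key_FF hp hw hzs1 hvu with rfl | hadj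
      · exact Finset.disjoint_left.mp hdisj hu hvT
      · exact (hTadj u hu vv hvT).1 hadj
    have hcardB : (S.biUnion F).card = ∑ u ∈ S, (F u).card := Finset.card_biUnion hpair
    have hlow : ∀ u ∈ S, p + 1 ≤ (F u).card := by
      intro u hu
      by_cases h1 : u.val < s1
      · exact absurd ⟨u, hu, h1⟩ hbody
      · by_cases h2 : u.val < s1 + z * p
        · exact (card_FF_petal hp hzs1 hoM h1 h2).2 rfl
        · exact card_FF_cls hw hpw hM hE h2
    have hsum : k * (p + 1) ≤ ∑ u ∈ S, (F u).card := by
      calc k * (p + 1) = S.card • (p + 1) := by rw [hSk, smul_eq_mul]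
        _ ≤ ∑ u ∈ S, (F u).card := Finset.card_nsmul_le_sum S _ _ hlow
    have htot : (T ∪ S.biUnion F).card ≤ M := by
      refine le_trans (Finset.card_le_univ _) ?_
      simp
    rw [Finset.card_union_of_disjoint hTB, hcardB, hTn] at htot
    omega
  case pos =>
    obtain ⟨x0, hx0S, hx0⟩ := hbody
    set F := FF M s1 p z w false with hFdef
    have hpair : ∀ x ∈ S, ∀ y ∈ S, x ≠ y → Disjoint (F x) (F y) := by
      intro x hx y hy hxy
      exact FF_disjoint hp hw hzs1 hxy (hSind x hx y hy hxy) (fun hc => by simp at hc)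
    have hTB : Disjoint T (S.biUnion F) := by
      rw [Finset.disjoint_left]
      intro vv hvT hvB
      obtain ⟨u, hu, hvu⟩ := Finset.mem_biUnion.mp hvB
      rcases key_FF hp hw hzs1 hvu with rfl | hadj
      · exact Finset.disjoint_left.mp hdisj hu hvT
      · exact (hTadj u hu vv hvT).1 hadj
    have hcardB : (S.biUnion F).card = ∑ u ∈ S, (F u).card := Finset.card_biUnion hpair
    have hlow : ∀ u ∈ S, p ≤ (F u).card := by
      intro u hu
      by_cases h1 : u.val < s1
      · rw [card_FF_body hs1M h1]; omega
      · by_cases h2 : u.val < s1 + z * p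
        · exact (card_FF_petal hp hzs1 hoM h1 h2).1
        · have hq := card_FF_cls (full := false) hw hpw hM hE h2
          rw [← hFdef] at hq
          omega
    have hx0card : (F x0).card = s1 := card_FF_body hs1M hx0
    obtain ⟨k', rfl⟩ : ∃ k', k = k' + 1 := ⟨k - 1, by omega⟩
    have hsum : (k' + 1) * (p + 1) ≤ ∑ u ∈ S, (F u).card := by
      have hins := Finset.add_sum_erase S (fun u => (F u).card) hx0S
      have hcerase : (S.erase x0).card = k' := by
        rw [Finset.card_erase_of_mem hx0S, hSk]
        omega
      have hlow' : ∀ u ∈ S.erase x0, p ≤ (F u).card := fun u hu =>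
        hlow u (Finset.mem_of_mem_erase hu)
      have hsum' : k' * p ≤ ∑ u ∈ S.erase x0, (F u).card := by
        calc k' * p = (S.erase x0).card • p := by rw [hcerase, smul_eq_mul]
          _ ≤ _ := Finset.card_nsmul_le_sum _ _ _ hlow'
      have he : (k' + 1) * (p + 1) = k' * p + p + k' + 1 := by ring
      omega
    have htot : (T ∪ S.biUnion F).card ≤ M := by
      refine le_trans (Finset.card_le_univ _) ?_
      simp
    rw [Finset.card_union_of_disjoint hTB, hcardB, hTn] at htot
    omega

end Book2

/-! ### Packaging -/

lemma construction (M m k n p w s1 z D E : ℕ)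
    (hp : 1 ≤ p) (hk : 1 ≤ k) (hzs1 : z ≤ s1) (hs1w : s1 ≤ w) (hs1pk : p + k ≤ s1)
    (hpw : p + 1 ≤ w) (hE : E = 0 ∨ (p + 1 ≤ E ∧ E ≤ w))
    (hM : M = s1 + z * p + (D * w + E)) (hMn : M + 1 = n + k * (p + 1)) (hwm : w < m) :
    ∃ G : SimpleGraph (Fin M), ¬ HasCycleLen G m ∧ ¬ HasBook Gᶜ k n := by
  have hw : 1 ≤ w := by omega
  refine ⟨graph M s1 p z w, ?_, ?_⟩
  · intro h
    exact no_long_cycle hp hzs1 hs1w hpw (by omega) hwm h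
  · exact no_book hp hw hk hzs1 hs1pk hpw hE hM hMn

lemma transfer {N M m k n : ℕ} (hNM : N ≤ M) (G : SimpleGraph (Fin M))
    (hc : ¬ HasCycleLen G m) (hb : ¬ HasBook Gᶜ k n) : ¬ RamseyProp m k n N := by
  intro hR
  set f : Fin N ↪ Fin M := ⟨Fin.castLE hNM, Fin.castLE_injective hNM⟩ with hfdef
  set G' : SimpleGraph (Fin N) := G.comap f with hG'def
  let φ : G' →g G := ⟨f, fun {a b} h => h⟩
  have hφinj : Function.Injective (φ : Fin N → Fin M) := Fin.castLE_injective hNM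
  rcases hR G' with ⟨v, c, hcyc, hlen⟩ | ⟨S, T, hSk, hTn, hdisj, hSadj, hSTadj⟩
  · refine hc ⟨φ v, c.map φ, ?_, ?_⟩
    · exact (SimpleGraph.Walk.map_isCycle_iff_of_injective hφinj).mpr hcyc
    · rw [SimpleGraph.Walk.length_map]; exact hlen
  · refine hb ⟨S.map f, T.map f, by rw [Finset.card_map]; exact hSk,
      by rw [Finset.card_map]; exact hTn, (Finset.disjoint_map f).mpr hdisj, ?_, ?_⟩
    · intro u hu v hv huv
      obtain ⟨a, ha, rfl⟩ := Finset.mem_map.mp hu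
      obtain ⟨b, hb', rfl⟩ := Finset.mem_map.mp hv
      have hab : a ≠ b := fun h => huv (by rw [h])
      have := (SimpleGraph.compl_adj _ _ _).mp (hSadj a ha b hb' hab)
      exact (SimpleGraph.compl_adj _ _ _).mpr ⟨huv, this.2⟩
    · intro u hu v hv
      obtain ⟨a, ha, rfl⟩ := Finset.mem_map.mp hu
      obtain ⟨b, hb', rfl⟩ := Finset.mem_map.mp hv
      have := (SimpleGraph.compl_adj _ _ _).mp (hSTadj a ha b hb')
      refine (SimpleGraph.compl_adj _ _ _).mpr ⟨?_, this.2⟩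
      intro h
      exact this.1 (hφinj h)

end Stmt5Aux

theorem stmt5 (t k m n p : ℕ) (ht : 2 ≤ t) (hk : 1 ≤ k) (hmEven : Even m)
    (hm : 4 * (t + k) + 2 ≤ m)
    (hn1 : (t - 1) * (m - 1) ≤ n - 1) (hn2 : n - 1 < t * (m - 1))
    (hp : p = (n - 1) / t) (hcase : p < m - k) :
    (∀ N : ℕ, RamseyProp m k n N → n + k * p + k ≤ N) ∧
    ∃ G : SimpleGraph (Fin (n + k * p + k - 1)),
      ¬ HasCycleLen G m ∧ ¬ HasBook Gᶜ k n := by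
  have ht0 : 0 < t := by omega
  have hm14 : 14 ≤ m := by omega
  obtain ⟨w, hw⟩ : ∃ w, m - 1 = w := ⟨_, rfl⟩
  rw [hw] at hn1 hn2
  have hwm : w < m := by omega
  obtain ⟨n', hn'⟩ : ∃ x, n - 1 = x := ⟨_, rfl⟩
  rw [hn'] at hn1 hn2 hp
  have hn'big : w ≤ n' := le_trans (Nat.le_mul_of_pos_left _ (by omega : 0 < t - 1)) hn1
  have hnn : n' + 1 = n := by omega
  obtain ⟨r, hdm, hrt⟩ : ∃ r, n' = t * p + r ∧ r < t :=
    ⟨n' % t, by rw [hp]; exact (Nat.div_add_mod n' t).symm, Nat.mod_lt _ ht0⟩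
  have hpk : p + k < m := by omega
  clear hp hcase
  have hpltw : p < w := by
    have h2 : t * p < t * w := by omega
    exact Nat.lt_of_mul_lt_mul_left h2
  obtain ⟨q, hqd⟩ : ∃ q, w - p = q := ⟨_, rfl⟩
  have hpq : p + q = w := by omega
  have hq1 : 1 ≤ q := by omega
  have hqk : k ≤ q := by omega
  have hp2tk : 2 * (t + k) ≤ p := by
    obtain ⟨t2, rfl⟩ : ∃ t2, t = t2 + 2 := ⟨t - 2, by omega⟩
    have hn1' : (t2 + 1) * w ≤ n' := by
      have he : t2 + 2 - 1 = t2 + 1 := rfl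
      rwa [he] at hn1
    obtain ⟨w5, hw5⟩ : ∃ w5, w = 4 * (t2 + 2 + k) + 1 + w5 :=
      ⟨w - (4 * (t2 + 2 + k) + 1), by omega⟩
    have e1 : (t2 + 1) * w = 4 * (t2 + 2 + k) * (t2 + 1) + (t2 + 1) + (t2 + 1) * w5 := by
      rw [hw5]; ring
    have h3 : 4 * (t2 + 2 + k) * (t2 + 1) ≤ (t2 + 2) * p := by omega
    have h4 : (t2 + 2) * (2 * (t2 + 2 + k)) ≤ 4 * (t2 + 2 + k) * (t2 + 1) := by
      have e2 : (t2 + 2) * (2 * (t2 + 2 + k)) = 2 * (t2 + 2) * (t2 + 2 + k) := by ring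
      have e3 : 4 * (t2 + 2 + k) * (t2 + 1) = 4 * (t2 + 1) * (t2 + 2 + k) := by ring
      rw [e2, e3]
      exact Nat.mul_le_mul_right _ (by omega)
    have h5 : (t2 + 2) * (2 * (t2 + 2 + k)) ≤ (t2 + 2) * p := le_trans h4 h3
    exact Nat.le_of_mul_le_mul_left h5 (by omega)
  obtain ⟨d, hddef⟩ : ∃ d, (k + r - 1) / q = d := ⟨_, rfl⟩
  have hd1 : d * q ≤ k + r - 1 := by rw [← hddef]; exact Nat.div_mul_le_self _ _
  have hd2 : k + r ≤ d * q + q := by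
    have hdm2 := Nat.div_add_mod (k + r - 1) q
    have hml : (k + r - 1) % q < q := Nat.mod_lt _ hq1
    have hcm : q * ((k + r - 1) / q) = (k + r - 1) / q * q := Nat.mul_comm _ _
    rw [hddef] at hdm2 hcm
    omega
  have hdB : d ≤ k + r - 1 := by rw [← hddef]; exact Nat.div_le_self _ _
  have hσB : d + 1 ≤ k + r := by omega
  obtain ⟨z, hzdef⟩ : ∃ z, t + k - (d + 1) = z := ⟨_, rfl⟩
  have hzσ : z + (d + 1) = t + k := by omega
  have hz1 : 1 ≤ z := by omega
  have hzp : z ≤ p := by omega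
  have hMn : (n + k * p + k - 1) + 1 = n + k * (p + 1) := by
    have e : k * (p + 1) = k * p + k := by ring
    omega
  have hex : ∃ G : SimpleGraph (Fin (n + k * p + k - 1)),
      ¬ HasCycleLen G m ∧ ¬ HasBook Gᶜ k n := by
    rcases Nat.eq_zero_or_pos d with hd0 | hdpos
    · -- one body of size p + (k + r), z = t + k - 1 petals of size p
      subst hd0
      have hBq : k + r ≤ q := by omega
      refine Stmt5Aux.construction _ m k n p w (p + (k + r)) z 0 0 (by omega) hk (by omega)
        (by omega) (by omega) (by omega) (Or.inl rfl) ?_ hMn hwm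
      have a1 : (z + 1) * p = (t + k) * p := by rw [show z + 1 = t + k by omega]
      have a2 : (z + 1) * p = z * p + p := by ring
      have a3 : (t + k) * p = t * p + k * p := by ring
      omega
    · obtain ⟨d', rfl⟩ : ∃ d', d = d' + 1 := ⟨d - 1, by omega⟩
      have hL1 : 1 ≤ k + r - (d' + 1) * q := by omega
      have hL2 : k + r - (d' + 1) * q ≤ q := by omega
      refine Stmt5Aux.construction _ m k n p w (p + q) z d' (p + (k + r - (d' + 1) * q))
        (by omega) hk (by omega) (by omega) (by omega) (by omega)
        (Or.inr ⟨by omega, by omega⟩) ?_ hMn hwm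
      have a1 : (z + (d' + 1 + 1)) * p = (t + k) * p := by rw [hzσ]
      have a2 : (z + (d' + 1 + 1)) * p = z * p + d' * p + 2 * p := by ring
      have a3 : (t + k) * p = t * p + k * p := by ring
      have a4 : d' * w = d' * p + d' * q := by rw [← hpq]; ring
      have a5 : (d' + 1) * q = d' * q + q := by ring
      omega
  obtain ⟨G, hGc, hGb⟩ := hex
  refine ⟨?_, G, hGc, hGb⟩
  intro N hR
  by_contra hlt
  push_neg at hlt
  have hNM : N ≤ n + k * p + k - 1 := by omega
  exact Stmt5Aux.transfer hNM G hGc hGb hR
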